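/- Let d ≥ 2, let G be a finite group with identity e and |G| = d², and let (U_g)_{g∈G} be a family of unitary d×d complex matrices forming a projective representation of G, i.e., for all g, g' ∈ G there exists c(g,g') ∈ ℂ with |c(g,g')| = 1 and U_g·U_{g'} = c(g,g')·U_{gg'}, and satisfying the orthogonality relation tr(U_g†·U_{g'}) = d·δ_{gg'}. Let A be a Hermitian d×d complex matrix with tr(A) = 1/d, tr(A²) = 1/d, and tr(A·U_g†·A·U_g) = 0 for every g ≠ e. Then the family (A_g)_{g∈G} with A_g := U_g·A·U_g† is a COB on ℂ^d: each A_g is Hermitian, tr(A_g·A_h) = (1/d)·δ_{gh} for all g, h ∈ G, and ∑_{g∈G} A_g = I. -/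

import Mathlib

open Matrix

lemma unit_conj_mul {w : ℂ} (hw : ‖w‖ = 1) : (starRingEnd ℂ) w * w = 1 := by
  calc (starRingEnd ℂ) w * w = ((Complex.normSq w : ℝ) : ℂ) := by
        rw [mul_comm, Complex.mul_conj]
    _ = 1 := by
        rw [Complex.normSq_eq_norm_sq, hw]; norm_num

lemma trace_mul_conjTranspose_self_eq_zero' {n : Type*} [Fintype n] [DecidableEq n]
    (M : Matrix n n ℂ) (h : (M * Mᴴ).trace = 0) : M = 0 := by
  have h1 : (M * Mᴴ).trace = ((∑ i, ∑ j, Complex.normSq (M i j) : ℝ) : ℂ) := by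
    simp only [trace, diag, mul_apply, conjTranspose_apply]
    push_cast
    congr 1; ext i; congr 1; ext j
    simpa using Complex.mul_conj (M i j)
  rw [h1] at h
  have h2 : (∑ i, ∑ j, Complex.normSq (M i j) : ℝ) = 0 := by exact_mod_cast h
  ext i j
  have := (Finset.sum_eq_zero_iff_of_nonneg (fun i _ => Finset.sum_nonneg
    (fun j _ => Complex.normSq_nonneg _))).mp h2 i (Finset.mem_univ i)
  have := (Finset.sum_eq_zero_iff_of_nonneg (fun j _ => Complex.normSq_nonneg _)).mp
    this j (Finset.mem_univ j)
  simpa using Complex.normSq_eq_zero.mp this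

/-- Fiducial-operator construction: Given a faithful-size
projective unitary representation `(U g)` of a group `G` of order `d²`
satisfying the orthogonality `tr(U_g† U_{g'}) = d δ_{g g'}`, and a Hermitian
fiducial operator `A` with `tr A = 1/d`, `tr A² = 1/d` and
`tr(A U_g† A U_g) = 0` for `g ≠ e`, the family `A_g := U_g A U_g†` is a COB
on `ℂ^d`. -/
theorem fiducial_operator_construction_is_cob (d : ℕ) (hd : 2 ≤ d)
    (G : Type*) [Group G] [Fintype G] [DecidableEq G]
    (hG : Fintype.card G = d ^ 2)
    (U : G → Matrix (Fin d) (Fin d) ℂ)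
    (hunitary : ∀ g, U g * (U g)ᴴ = 1)
    (hproj : ∀ g g', ∃ c : ℂ, ‖c‖ = 1 ∧ U g * U g' = c • U (g * g'))
    (horth : ∀ g g', ((U g)ᴴ * U g').trace = if g = g' then (d : ℂ) else 0)
    (A : Matrix (Fin d) (Fin d) ℂ) (hA : A.IsHermitian)
    (htr : A.trace = (1 / (d : ℂ)))
    (htr2 : (A * A).trace = (1 / (d : ℂ)))
    (hfid : ∀ g : G, g ≠ 1 → (A * (U g)ᴴ * A * U g).trace = 0) :
    (∀ g, (U g * A * (U g)ᴴ).IsHermitian) ∧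
    (∀ g h : G, ((U g * A * (U g)ᴴ) * (U h * A * (U h)ᴴ)).trace =
      if g = h then (1 / (d : ℂ)) else 0) ∧
    (∑ g, U g * A * (U g)ᴴ = 1) := by
  have hU1 : ∀ g, (U g)ᴴ * U g = 1 := fun g => mul_eq_one_comm.mp (hunitary g)
  -- U 1 is a unit scalar
  obtain ⟨c₁, hc₁, he⟩ := hproj 1 1
  have hUone : U 1 = c₁ • 1 := by
    have : U 1 * U 1 * (U 1)ᴴ = (c₁ • U 1) * (U 1)ᴴ := by rw [mul_one] at he; rw [he]
    rw [mul_assoc, hunitary, mul_one, smul_mul_assoc, hunitary] at this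
    exact this
  -- conjugate transpose is a unit scalar times U g⁻¹
  have hconj : ∀ g : G, ∃ z : ℂ, ‖z‖ = 1 ∧ (U g)ᴴ = z • U g⁻¹ := by
    intro g
    obtain ⟨c, hc, hcc⟩ := hproj g⁻¹ g
    rw [inv_mul_cancel, hUone, smul_smul] at hcc
    have hne : c * c₁ ≠ 0 := by
      have h1 : ‖c * c₁‖ = 1 := by rw [norm_mul, hc, hc₁, mul_one]
      exact norm_ne_zero_iff.mp (by rw [h1]; norm_num)
    refine ⟨(c * c₁)⁻¹, ?_, ?_⟩
    · rw [norm_inv, norm_mul, hc, hc₁]; norm_num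
    · calc (U g)ᴴ = ((c * c₁)⁻¹ • (U g⁻¹ * U g)) * (U g)ᴴ := by
            rw [hcc, smul_smul, inv_mul_cancel₀ hne, one_smul, one_mul]
        _ = (c * c₁)⁻¹ • U g⁻¹ := by
            rw [smul_mul_assoc, mul_assoc, hunitary, mul_one]
  -- key pairwise trace computation
  have key : ∀ g h : G, ((U g * A * (U g)ᴴ) * (U h * A * (U h)ᴴ)).trace =
      if g = h then (1 / (d : ℂ)) else 0 := by
    intro g h
    obtain ⟨z, hz, hzz⟩ := hconj h
    obtain ⟨c, hc, hcc⟩ := hproj h⁻¹ g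
    have step1 : ((U g * A * (U g)ᴴ) * (U h * A * (U h)ᴴ)).trace
        = (A * ((U h)ᴴ * U g)ᴴ * A * ((U h)ᴴ * U g)).trace := by
      rw [show U g * A * (U g)ᴴ * (U h * A * (U h)ᴴ)
          = U g * (A * (U g)ᴴ * (U h * A * (U h)ᴴ)) by noncomm_ring,
        trace_mul_comm, conjTranspose_mul, conjTranspose_conjTranspose]
      congr 1
      noncomm_ring
    have hV : (U h)ᴴ * U g = (z * c) • U (h⁻¹ * g) := by
      rw [hzz, smul_mul_assoc, hcc, smul_smul]
    have hzc : ‖z * c‖ = 1 := by rw [norm_mul, hz, hc, mul_one]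
    have step2 : (A * ((z * c) • U (h⁻¹ * g))ᴴ * A * ((z * c) • U (h⁻¹ * g))).trace
        = (A * (U (h⁻¹ * g))ᴴ * A * U (h⁻¹ * g)).trace := by
      rw [conjTranspose_smul]
      simp only [Matrix.mul_smul, Matrix.smul_mul, smul_smul, trace_smul, smul_eq_mul]
      simp only [Complex.star_def]
      linear_combination (A * (U (h⁻¹ * g))ᴴ * A * U (h⁻¹ * g)).trace * unit_conj_mul hzc
    rw [step1, hV, step2]
    by_cases hgh : g = h
    · subst hgh
      rw [if_pos rfl, inv_mul_cancel, hUone, conjTranspose_smul, conjTranspose_one]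
      simp only [Matrix.mul_smul, Matrix.smul_mul, smul_smul, trace_smul, smul_eq_mul,
        Matrix.mul_one]
      rw [htr2]
      simp only [Complex.star_def]
      linear_combination (1 / (d : ℂ)) * unit_conj_mul hc₁
    · rw [if_neg hgh]
      apply hfid
      intro hk
      exact hgh (by rwa [inv_mul_eq_one, eq_comm] at hk)
  refine ⟨?_, key, ?_⟩
  · intro g
    unfold Matrix.IsHermitian
    rw [conjTranspose_mul, conjTranspose_mul, conjTranspose_conjTranspose, hA.eq, mul_assoc]
  · -- sum part
    set S := ∑ g, U g * A * (U g)ᴴ with hS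
    have hSherm : Sᴴ = S := by
      rw [hS, conjTranspose_sum]
      refine Finset.sum_congr rfl (fun g _ => ?_)
      rw [conjTranspose_mul, conjTranspose_mul, conjTranspose_conjTranspose, hA.eq, mul_assoc]
    have hd0 : (d : ℂ) ≠ 0 := by
      exact_mod_cast (by omega : d ≠ 0)
    have htrS : S.trace = (d : ℂ) := by
      rw [hS, trace_sum]
      have : ∀ g : G, (U g * A * (U g)ᴴ).trace = 1 / (d : ℂ) := by
        intro g
        rw [trace_mul_cycle, hU1, one_mul, htr]
      rw [Finset.sum_congr rfl (fun g _ => this g), Finset.sum_const, Finset.card_univ,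
        hG, nsmul_eq_mul]
      push_cast
      field_simp
    have htrS2 : (S * S).trace = (d : ℂ) := by
      rw [hS, Finset.sum_mul_sum, trace_sum]
      have : ∀ g : G, (∑ h, ((U g * A * (U g)ᴴ) * (U h * A * (U h)ᴴ))).trace = 1 / d := by
        intro g
        rw [trace_sum, Finset.sum_congr rfl (fun h _ => key g h), Finset.sum_ite_eq
          Finset.univ g (fun _ => (1:ℂ)/d)]
        simp
      rw [Finset.sum_congr rfl (fun g _ => this g), Finset.sum_const, Finset.card_univ,
        hG, nsmul_eq_mul]
      push_cast
      field_simp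
    have hzero : ((S - 1) * (S - 1)ᴴ).trace = 0 := by
      rw [conjTranspose_sub, hSherm, conjTranspose_one]
      rw [sub_mul, mul_sub, mul_sub, trace_sub, trace_sub, trace_sub, mul_one, one_mul,
        htrS2, htrS, mul_one, trace_one]
      simp [htrS]
    have := trace_mul_conjTranspose_self_eq_zero' (S - 1) hzero
    rw [sub_eq_zero] at this
    exact this
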